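/- Let G be a finite strongly connected directed graph with at least one edge. Then there exists a sequence of subgraphs G₀ ⊆ G₁ ⊆ ... ⊆ G_m = G such that G₀ is a simple directed cycle and, for each i ≥ 1, G_i = G_{i-1} ∪ P_i where P_i is a chordal path of G_{i-1}, meaning a simple nonempty directed path P_i : u ⇝ v in G whose intersection with the vertex set of G_{i-1} is exactly {u, v}. -/

import Mathlib

/-- The edges traversed by a list of vertices, in order. -/
def pathEdges {V : Type*} (l : List V) : Set (V × V) := {p | p ∈ l.zip l.tail}

/-- Vertices touched by a set of edges. -/
def verts {V : Type*} (H : Set (V × V)) : Set V := {v | ∃ w, (v, w) ∈ H ∨ (w, v) ∈ H}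

/-- A simple directed cycle, as a closed walk `v₀ … v_{m-1} v₀` with distinct
vertices except the repeated endpoint. -/
def IsSimpleCycle {V : Type*} (E : Set (V × V)) (l : List V) : Prop :=
  2 ≤ l.length ∧ l.head? = l.getLast? ∧ l.Chain' (fun a b => (a, b) ∈ E) ∧ l.dropLast.Nodup

/-- A chordal path for the subgraph `H`: a simple nonempty directed path in `E`
whose intersection with the vertex set of `H` is exactly its two endpoints. -/
def IsChordalPath {V : Type*} (E H : Set (V × V)) (l : List V) : Prop :=
  2 ≤ l.length ∧ l.Chain' (fun a b => (a, b) ∈ E) ∧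
  l.dropLast.Nodup ∧ l.tail.Nodup ∧
  (∀ v ∈ l, v ∈ verts H ↔ (l.head? = some v ∨ l.getLast? = some v))

lemma verts_mono {V : Type*} {H K : Set (V × V)} (h : H ⊆ K) : verts H ⊆ verts K :=
  fun _ ⟨w, hw⟩ => ⟨w, hw.imp (@h _) (@h _)⟩

lemma getLast?_cons_ne {V : Type*} {a : V} {l : List V} (h : l ≠ []) :
    (a :: l).getLast? = l.getLast? := by
  rw [show a :: l = [a] ++ l from rfl, List.getLast?_append_of_ne_nil _ h]

lemma mem_pathEdges_cons {V : Type*} {a b : V} {l : List V}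
    (h : l.head? = some b) : (a, b) ∈ pathEdges (a :: l) := by
  cases l with
  | nil => simp at h
  | cons c t =>
    simp only [List.head?_cons, Option.some_inj] at h
    subst h
    simp [pathEdges]

lemma pathEdges_subset {V : Type*} {E : Set (V × V)} :
    ∀ {l : List V}, l.Chain' (fun a b => (a, b) ∈ E) → pathEdges l ⊆ E
  | [], _ => by simp [pathEdges]
  | [_], _ => by simp [pathEdges]
  | a :: b :: t, h => by
    simp only [List.Chain', List.isChain_cons_cons] at h
    intro p hp
    simp only [pathEdges, List.tail_cons, List.zip_cons_cons, Set.mem_setOf_eq,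
      List.mem_cons] at hp
    rcases hp with rfl | hp
    · exact h.1
    · exact pathEdges_subset h.2 hp

lemma chain'_nodup_path {V : Type*} (r : V → V → Prop) :
    ∀ (n : ℕ) (l : List V), l.length ≤ n → l.Chain' r →
    ∃ l' : List V, l'.Chain' r ∧ l'.Nodup ∧ l'.head? = l.head? ∧
      l'.getLast? = l.getLast? ∧ ∀ x ∈ l', x ∈ l := by
  intro n
  induction n with
  | zero =>
    intro l hl _
    rw [Nat.le_zero, List.length_eq_zero_iff] at hl
    subst hl
    exact ⟨[], by simp [List.Chain']⟩
  | succ n ih =>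
    intro l hl hc
    match l with
    | [] => exact ⟨[], by simp [List.Chain']⟩
    | a :: t =>
      by_cases ha : a ∈ t
      · obtain ⟨t₁, t₂, rfl⟩ := List.append_of_mem ha
        have hsuf : (a :: t₂) <:+ (a :: (t₁ ++ a :: t₂)) := ⟨a :: t₁, by simp⟩
        have hlen : (a :: t₂).length ≤ n := by
          simp only [List.length_cons, List.length_append] at hl ⊢
          omega
        obtain ⟨l', h1, h2, h3, h4, h5⟩ := ih (a :: t₂) hlen (hc.suffix hsuf)
        refine ⟨l', h1, h2, by simpa using h3, ?_, fun x hx => hsuf.subset (h5 x hx)⟩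
        rw [h4, show a :: (t₁ ++ a :: t₂) = (a :: t₁) ++ (a :: t₂) by simp,
          List.getLast?_append_of_ne_nil _ (by simp)]
      · match t, hc with
        | [], _ => exact ⟨[a], by simp [List.Chain']⟩
        | b :: t', hc =>
          simp only [List.Chain', List.isChain_cons_cons] at hc
          have hlen : (b :: t').length ≤ n := by
            simp only [List.length_cons] at hl ⊢; omega
          obtain ⟨l', h1, h2, h3, h4, h5⟩ := ih (b :: t') hlen hc.2
          have hl'ne : l' ≠ [] := by
            intro h0; rw [h0] at h3; simp at h3
          refine ⟨a :: l', ?_, ?_, by simp, ?_, ?_⟩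
          · simp only [List.Chain', List.isChain_cons]
            refine ⟨fun y hy => ?_, h1⟩
            rw [h3] at hy
            simp only [List.head?_cons, Option.mem_def, Option.some_inj] at hy
            subst hy; exact hc.1
          · exact List.nodup_cons.mpr ⟨fun h => ha (h5 a h), h2⟩
          · rw [getLast?_cons_ne hl'ne, h4, List.getLast?_cons_cons]
          · intro x hx
            rcases List.mem_cons.mp hx with rfl | hx
            · exact List.mem_cons_self
            · exact List.mem_cons_of_mem _ (h5 x hx)

lemma exists_simple_path {V : Type*} (r : V → V → Prop) {a b : V}
    (h : Relation.ReflTransGen r a b) :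
    ∃ l : List V, l.Chain' r ∧ l.Nodup ∧ l.head? = some a ∧ l.getLast? = some b := by
  obtain ⟨l, hc, hlast⟩ := List.exists_isChain_cons_of_relationReflTransGen h
  obtain ⟨l', h1, h2, h3, h4, _⟩ :=
    chain'_nodup_path r (a :: l).length (a :: l) le_rfl (by exact hc)
  refine ⟨l', h1, h2, by simpa using h3, ?_⟩
  rw [h4, List.getLast?_eq_getLast (List.cons_ne_nil a l), hlast]

lemma exists_crossing {V : Type*} {r : V → V → Prop} {P : V → Prop} {x u : V}
    (h : Relation.ReflTransGen r x u) (hx : P x) (hu : ¬ P u) :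
    ∃ a b, P a ∧ ¬ P b ∧ r a b := by
  revert hu
  induction h with
  | refl => exact fun hu => absurd hx hu
  | @tail b c _ hbc ih =>
    intro hc
    by_cases hb : P b
    · exact ⟨b, c, hb, hc, hbc⟩
    · exact ih hb

noncomputable def muMeasure {V : Type*} (E H : Set (V × V)) : ℕ :=
  (Set.univ \ verts H).ncard + (E \ H).ncard

lemma step_lemma {V : Type*} [Fintype V] {E H : Set (V × V)}
    (hSC : ∀ u v : V, Relation.ReflTransGen (fun a b => (a, b) ∈ E) u v)
    (hHE : H ⊆ E) (hv : (verts H).Nonempty) (hne : ¬ E ⊆ H) :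
    ∃ l : List V, IsChordalPath E H l ∧
      muMeasure E (H ∪ pathEdges l) < muMeasure E H := by
  classical
  obtain ⟨⟨u, v⟩, huv, huvH⟩ := Set.not_subset.mp hne
  by_cases hcase : ∃ p ∈ E, p ∉ H ∧ p.1 ∈ verts H ∧ p.2 ∈ verts H
  · -- Case A: add a single edge between existing vertices
    obtain ⟨⟨u, v⟩, hE, hH, hu, hv2⟩ := hcase
    refine ⟨[u, v], ⟨by norm_num, by simp [hE, List.Chain'], by simp, by simp, ?_⟩, ?_⟩
    · intro w hw
      simp only [List.mem_cons, List.not_mem_nil, or_false] at hw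
      rcases hw with rfl | rfl
      · exact iff_of_true hu (Or.inl rfl)
      · exact iff_of_true hv2 (Or.inr rfl)
    · have hsub : H ⊆ H ∪ pathEdges [u, v] := Set.subset_union_left
      have h1 : (Set.univ \ verts (H ∪ pathEdges [u, v])).ncard ≤
          (Set.univ \ verts H).ncard :=
        Set.ncard_le_ncard (Set.diff_subset_diff_right (verts_mono hsub)) (Set.toFinite _)
      have h2 : (E \ (H ∪ pathEdges [u, v])).ncard < (E \ H).ncard := by
        refine Set.ncard_lt_ncard ⟨Set.diff_subset_diff_right hsub, ?_⟩ (Set.toFinite _)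
        intro hcon
        have : (u, v) ∈ E \ (H ∪ pathEdges [u, v]) := hcon ⟨hE, hH⟩
        exact this.2 (Or.inr (by simp [pathEdges]))
      exact Nat.add_lt_add_of_le_of_lt h1 h2
  · -- Case B: add an ear through a new vertex
    push_neg at hcase
    have hcross : ∃ a b, a ∈ verts H ∧ b ∉ verts H ∧ (a, b) ∈ E := by
      by_cases hu : u ∈ verts H
      · exact ⟨u, v, hu, hcase (u, v) huv huvH hu, huv⟩
      · obtain ⟨x, hx⟩ := hv
        obtain ⟨a, b, h1, h2, h3⟩ := exists_crossing (hSC x u) hx hu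
        exact ⟨a, b, h1, h2, h3⟩
    obtain ⟨a, b, haH, hbH, habE⟩ := hcross
    obtain ⟨l, hlc, hln, hlh, hll⟩ := exists_simple_path _ (hSC b a)
    set P : V → Bool := fun y => decide (y ∉ verts H) with hP
    have haMem : a ∈ l := by
      obtain ⟨h0, hgl⟩ := List.mem_getLast?_eq_getLast (l := l) hll
      rw [hgl]; exact List.getLast_mem h0
    have hd : l.dropWhile P ≠ [] := by
      intro h0
      have := List.dropWhile_eq_nil_iff.mp h0 a haMem
      simp [hP, haH] at this
    obtain ⟨x, t₂, hdx⟩ : ∃ x t₂, l.dropWhile P = x :: t₂ := by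
      cases hc2 : l.dropWhile P with
      | nil => exact absurd hc2 hd
      | cons x t₂ => exact ⟨x, t₂, rfl⟩
    have hx : x ∈ verts H := by
      have h := List.head_dropWhile_not P hd
      have hh : (l.dropWhile P).head hd = x := by simp only [hdx, List.head_cons]
      rw [hh] at h
      simpa [hP] using h
    set l₁ := l.takeWhile P with hl₁def
    have hsplit : l = l₁ ++ x :: t₂ := by
      conv_lhs => rw [← List.takeWhile_append_dropWhile (p := P) (l := l), hdx]
    have hpre : (l₁ ++ [x]) <+: l := ⟨t₂, by rw [hsplit]; simp⟩
    have hl'c : (l₁ ++ [x]).Chain' (fun a b => (a, b) ∈ E) := hlc.prefix hpre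
    have hl'n : (l₁ ++ [x]).Nodup := hln.sublist hpre.sublist
    have hmem₁ : ∀ y ∈ l₁, y ∉ verts H := fun y hy => by
      simpa [hP] using List.mem_takeWhile_imp hy
    have hl'h : (l₁ ++ [x]).head? = some b := by
      obtain ⟨t, rfl⟩ : ∃ t, l = b :: t := by
        cases l with
        | nil => simp at hlh
        | cons c t => simp only [List.head?_cons, Option.some_inj] at hlh; exact ⟨t, by rw [hlh]⟩
      have hPb : P b = true := by simp [hP, hbH]
      rw [hl₁def, List.takeWhile_cons_of_pos hPb]
      simp
    have hl'l : (l₁ ++ [x]).getLast? = some x := List.getLast?_concat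
    have hearLast : (a :: (l₁ ++ [x])).getLast? = some x := by
      rw [getLast?_cons_ne (by simp), hl'l]
    refine ⟨a :: (l₁ ++ [x]), ⟨?_, ?_, ?_, ?_, ?_⟩, ?_⟩
    · simp only [List.length_cons, List.length_append, List.length_singleton]; omega
    · simp only [List.Chain', List.isChain_cons]
      refine ⟨fun y hy => ?_, hl'c⟩
      rw [hl'h] at hy
      simp only [Option.mem_def, Option.some_inj] at hy
      subst hy; exact habE
    · have : (a :: (l₁ ++ [x])).dropLast = a :: l₁ := by
        rw [show a :: (l₁ ++ [x]) = (a :: l₁) ++ [x] by simp, List.dropLast_concat]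
      rw [this]
      refine List.nodup_cons.mpr ⟨fun h => hmem₁ a h haH, ?_⟩
      exact hln.sublist (List.takeWhile_prefix P).sublist
    · exact hl'n
    · intro w hw
      rw [List.head?_cons]
      rcases List.mem_cons.mp hw with rfl | hw
      · exact iff_of_true haH (Or.inl rfl)
      rcases List.mem_append.mp hw with hw | hw
      · refine iff_of_false (hmem₁ w hw) ?_
        rintro (h | h)
        · simp only [Option.some_inj] at h; subst h; exact hmem₁ _ hw haH
        · rw [hearLast] at h
          simp only [Option.some_inj] at h; subst h; exact hmem₁ _ hw hx
      · simp only [List.mem_singleton] at hw; subst hw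
        exact iff_of_true hx (Or.inr hearLast)
    · -- measure decreases: b is a new vertex
      set H' := H ∪ pathEdges (a :: (l₁ ++ [x])) with hH'
      have hsub : H ⊆ H' := Set.subset_union_left
      have habH' : (a, b) ∈ H' := Or.inr (mem_pathEdges_cons hl'h)
      have hbH' : b ∈ verts H' := ⟨a, Or.inr habH'⟩
      have h1 : (Set.univ \ verts H').ncard < (Set.univ \ verts H).ncard := by
        refine Set.ncard_lt_ncard ⟨Set.diff_subset_diff_right (verts_mono hsub), ?_⟩
          (Set.toFinite _)
        intro hcon
        exact (hcon ⟨Set.mem_univ b, hbH⟩).2 hbH'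
      have h2 : (E \ H').ncard ≤ (E \ H).ncard :=
        Set.ncard_le_ncard (Set.diff_subset_diff_right hsub) (Set.toFinite _)
      exact Nat.add_lt_add_of_lt_of_le h1 h2

lemma extend_lemma {V : Type*} [Fintype V] (E : Set (V × V))
    (hSC : ∀ u v : V, Relation.ReflTransGen (fun a b => (a, b) ∈ E) u v) :
    ∀ (n : ℕ) (H : Set (V × V)), muMeasure E H ≤ n → H ⊆ E → (verts H).Nonempty →
    ∃ (m : ℕ) (Gs : ℕ → Set (V × V)), Gs 0 = H ∧ Gs m = E ∧ (∀ i, Gs i ⊆ Gs (i + 1)) ∧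
      ∀ i < m, ∃ l : List V, IsChordalPath E (Gs i) l ∧ Gs (i + 1) = Gs i ∪ pathEdges l := by
  intro n
  induction n with
  | zero =>
    intro H hmu hHE _
    have h0 : (E \ H).ncard = 0 := by
      have := hmu; unfold muMeasure at this; omega
    have hEH : E ⊆ H := Set.diff_eq_empty.mp ((Set.ncard_eq_zero (Set.toFinite _)).mp h0)
    have : H = E := Set.Subset.antisymm hHE hEH
    subst this
    exact ⟨0, fun _ => H, rfl, rfl, fun _ => subset_rfl, by omega⟩
  | succ n ih =>
    intro H hmu hHE hv
    by_cases hEH : E ⊆ H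
    · have : H = E := Set.Subset.antisymm hHE hEH
      subst this
      exact ⟨0, fun _ => H, rfl, rfl, fun _ => subset_rfl, by omega⟩
    · obtain ⟨l, hl, hmu'⟩ := step_lemma hSC hHE hv hEH
      have hH'E : H ∪ pathEdges l ⊆ E := Set.union_subset hHE (pathEdges_subset hl.2.1)
      have hv' : (verts (H ∪ pathEdges l)).Nonempty :=
        hv.mono (verts_mono Set.subset_union_left)
      obtain ⟨m, Gs, hGs0, hGsm, hmono, hstep⟩ := ih (H ∪ pathEdges l) (by omega) hH'E hv'
      refine ⟨m + 1, fun i => Nat.casesOn i H (fun j => Gs j), rfl, hGsm, ?_, ?_⟩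
      · intro i
        cases i with
        | zero => show H ⊆ Gs 0; rw [hGs0]; exact Set.subset_union_left
        | succ j => exact hmono j
      · intro i hi
        cases i with
        | zero =>
          refine ⟨l, hl, ?_⟩
          show Gs 0 = H ∪ pathEdges l
          exact hGs0
        | succ j => exact hstep j (by omega)

/-- chordal path decomposition of a strongly connected digraph. -/
theorem stmt_4 {V : Type*} [Fintype V] (E : Set (V × V)) (hne : E.Nonempty)
    (hSC : ∀ u v : V, Relation.ReflTransGen (fun a b => (a, b) ∈ E) u v) :
    ∃ (m : ℕ) (Gs : ℕ → Set (V × V)),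
      (∀ i, Gs i ⊆ Gs (i + 1)) ∧ Gs m = E ∧
      (∃ c : List V, IsSimpleCycle E c ∧ Gs 0 = pathEdges c) ∧
      (∀ i < m, ∃ l : List V, IsChordalPath E (Gs i) l ∧
        Gs (i + 1) = Gs i ∪ pathEdges l) := by
  classical
  obtain ⟨⟨u, v⟩, huv⟩ := hne
  obtain ⟨l, hlc, hln, hlh, hll⟩ := exists_simple_path _ (hSC v u)
  have hlne : l ≠ [] := by intro h0; rw [h0] at hlh; simp at hlh
  have hgl : l.getLast hlne = u := by
    rw [List.getLast?_eq_getLast hlne] at hll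
    exact Option.some_inj.mp hll
  have hdec : l.dropLast ++ [u] = l := by
    conv_rhs => rw [← List.dropLast_append_getLast hlne]
    rw [hgl]
  have hcyc : IsSimpleCycle E (u :: l) := by
    refine ⟨?_, ?_, ?_, ?_⟩
    · simp only [List.length_cons]
      have := List.length_pos_iff.mpr hlne; omega
    · rw [List.head?_cons, getLast?_cons_ne hlne, hll]
    · simp only [List.Chain', List.isChain_cons]
      refine ⟨fun y hy => ?_, hlc⟩
      rw [hlh] at hy
      simp only [Option.mem_def, Option.some_inj] at hy
      subst hy; exact huv
    · have : (u :: l).dropLast = u :: l.dropLast := by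
        conv_lhs => rw [← hdec]
        rw [show u :: (l.dropLast ++ [u]) = (u :: l.dropLast) ++ [u] by simp,
          List.dropLast_concat]
      rw [this]
      refine List.nodup_cons.mpr ⟨?_, hln.sublist (List.dropLast_sublist l)⟩
      intro hmem
      rw [← hdec] at hln
      exact (List.nodup_append'.mp hln).2.2 hmem (List.mem_singleton_self u)
  have hsubE : pathEdges (u :: l) ⊆ E := pathEdges_subset hcyc.2.2.1
  have hvne : (verts (pathEdges (u :: l))).Nonempty :=
    ⟨u, v, Or.inl (mem_pathEdges_cons hlh)⟩
  obtain ⟨m, Gs, hGs0, hGsm, hmono, hstep⟩ :=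
    extend_lemma E hSC (muMeasure E (pathEdges (u :: l))) (pathEdges (u :: l)) le_rfl
      hsubE hvne
  exact ⟨m, Gs, hmono, hGsm, ⟨u :: l, hcyc, hGs0⟩, hstep⟩
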